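/- Under the BCD setting and Assumptions stated in the context, define, for each block i ∈ {1,…,p} and each iteration k > m, o(i,k) := j_{k̂}, where k̂ is the largest iteration index with k̂ < k and i_{k̂} = i. Then for every i ∈ {1,…,p} and every k > m: (a) x_i^k ∈ A_{i,o(i,k)}; (b) the multipliers μ_{i,o(i,k),ℓ} := μ_ℓ^{k̂} ≥ 0 satisfy min{μ_{i,o(i,k),ℓ}, −g_{i,o(i,k),ℓ}(x_i^k)} ≤ δ for all ℓ = 1,…,n_g(i,o(i,k)); and (c) lim_{k→∞} ‖∇_i f(x^k) + Σ_{ℓ=1}^{n_g(i,o(i,k))} μ_{i,o(i,k),ℓ} ∇g_{i,o(i,k),ℓ}(x_i^k)‖ = 0. -/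

import Mathlib

open Filter Topology RealInnerProductSpace

set_option maxHeartbeats 1000000

/-- Theorem 4.1 of the paper (convergence part). Under the BCD setting, for each
block `i` and each iteration `k > m`, writing `k̂ = Nat.findGreatest (ik · = i) (k-1)`
for the latest iteration before `k` at which block `i` was chosen, the iterate
`x k i` belongs to the covering set `A i (jk k̂)`, the multipliers `μ k̂ ℓ ≥ 0`
satisfy the `δ`-complementarity condition, and the KKT residual
`‖∇_i f(x^k) + Σ_ℓ μ_ℓ ∇g_{i,o(i,k),ℓ}(x_i^k)‖` tends to zero. -/
theorem bcd_convergence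
    (p : ℕ) (hp : 0 < p) (nd : Fin p → ℕ)
    (f : (∀ i : Fin p, EuclideanSpace ℝ (Fin (nd i))) → ℝ)
    (hf : Differentiable ℝ f)
    (Ω : ∀ i : Fin p, Set (EuclideanSpace ℝ (Fin (nd i))))
    (hΩclosed : ∀ i, IsClosed (Ω i))
    (hΩbdd : ∀ i, Bornology.IsBounded (Ω i))
    (nops : Fin p → ℕ)
    (A : ∀ i : Fin p, ℕ → Set (EuclideanSpace ℝ (Fin (nd i))))
    (hAopen : ∀ i j, j < nops i → IsOpen (A i j))
    (hcover : ∀ i, Ω i ⊆ ⋃ j ∈ Finset.range (nops i), A i j)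
    (ng : Fin p → ℕ → ℕ)
    (g : ∀ i : Fin p, ℕ → ℕ → EuclideanSpace ℝ (Fin (nd i)) → ℝ)
    (hgdiff : ∀ i j ℓ, j < nops i → ℓ < ng i j →
      ∀ z ∈ A i j, DifferentiableAt ℝ (g i j ℓ) z)
    (hconstitutive : ∀ i j, j < nops i →
      Ω i ∩ A i j = {z ∈ A i j | ∀ ℓ < ng i j, g i j ℓ z ≤ 0})
    (α δ θ γ cB : ℝ)
    (hα : 0 < α) (hδ : 0 ≤ δ) (hθ : 0 < θ) (hγ : 0 < γ) (hcB : 0 < cB)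
    (x : ℕ → ∀ i : Fin p, EuclideanSpace ℝ (Fin (nd i)))
    (hx0 : ∀ i, x 0 i ∈ Ω i)
    (ik : ℕ → Fin p)
    (jk : ℕ → ℕ) (hjk : ∀ k, jk k < nops (ik k))
    (Bk : ∀ k : ℕ,
      EuclideanSpace ℝ (Fin (nd (ik k))) →L[ℝ] EuclideanSpace ℝ (Fin (nd (ik k))))
    (hBsym : ∀ k, IsSelfAdjoint (Bk k)) (hBnorm : ∀ k, ‖Bk k‖ ≤ cB)
    (σ : ℕ → ℝ) (hσ : ∀ k, 0 ≤ σ k ∧ σ k < 2 * (γ + cB + 2 * α))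
    (μ : ℕ → ℕ → ℝ) (hμ : ∀ k ℓ, 0 ≤ μ k ℓ)
    (hupdate : ∀ k, ∀ j : Fin p, j ≠ ik k → x (k + 1) j = x k j)
    (hmem : ∀ k, x (k + 1) (ik k) ∈ A (ik k) (jk k))
    (halt : ∀ k,
      (⟪gradient (fun t => f (Function.update (x k) (ik k) t)) (x k (ik k)),
          x (k + 1) (ik k) - x k (ik k)⟫
        + 1 / 2 * ⟪x (k + 1) (ik k) - x k (ik k),
            Bk k (x (k + 1) (ik k) - x k (ik k))⟫
        + σ k / 2 * ‖x (k + 1) (ik k) - x k (ik k)‖ ^ 2 ≤ 0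
       ∧ ‖gradient (fun t => f (Function.update (x k) (ik k) t)) (x k (ik k))
            + Bk k (x (k + 1) (ik k) - x k (ik k))
            + σ k • (x (k + 1) (ik k) - x k (ik k))
            + ∑ ℓ ∈ Finset.range (ng (ik k) (jk k)),
                μ k ℓ • gradient (g (ik k) (jk k) ℓ) (x (k + 1) (ik k))‖
          ≤ θ * ‖x (k + 1) (ik k) - x k (ik k)‖
       ∧ ∀ ℓ < ng (ik k) (jk k),
            min (μ k ℓ) (-g (ik k) (jk k) ℓ (x (k + 1) (ik k))) ≤ δ)
      ∨ (σ k = 0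
       ∧ gradient (fun t => f (Function.update (x (k + 1)) (ik k) t)) (x (k + 1) (ik k))
            + ∑ ℓ ∈ Finset.range (ng (ik k) (jk k)),
                μ k ℓ • gradient (g (ik k) (jk k) ℓ) (x (k + 1) (ik k)) = 0
       ∧ ∀ ℓ < ng (ik k) (jk k),
            min (μ k ℓ) (-g (ik k) (jk k) ℓ (x (k + 1) (ik k))) ≤ 0))
    (hdescent : ∀ k, f (x (k + 1)) ≤ f (x k) - α * ‖x (k + 1) (ik k) - x k (ik k)‖ ^ 2)
    (hlip1 : ∀ k,
      ‖gradient (fun t => f (Function.update (x k) (ik k) t)) (x k (ik k))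
        - gradient (fun t => f (Function.update (x (k + 1)) (ik k) t)) (x (k + 1) (ik k))‖
      ≤ γ * ‖x (k + 1) (ik k) - x k (ik k)‖)
    (hlip2 : ∀ k₁ k₂ : ℕ, ∀ i₀ : Fin p, (∀ j : Fin p, j ≠ i₀ → x k₁ j = x k₂ j) →
      ∀ i : Fin p,
        ‖gradient (fun t => f (Function.update (x k₁) i t)) (x k₁ i)
          - gradient (fun t => f (Function.update (x k₂) i t)) (x k₂ i)‖
        ≤ γ * ‖x k₂ i₀ - x k₁ i₀‖)
    (fbound : ℝ) (hfb : ∀ k, fbound ≤ f (x k))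
    (m : ℕ) (hm : 1 ≤ m)
    (hfirst : ∀ ν : Fin p, ∃ k ≤ m, ik k = ν)
    (hgap : ∀ ν : Fin p, ∀ k, ik k = ν → ∃ k', k < k' ∧ k' ≤ k + m ∧ ik k' = ν) :
    ∀ i : Fin p,
      (∀ k, m < k →
        x k i ∈ A i (jk (Nat.findGreatest (fun t => ik t = i) (k - 1)))
        ∧ ∀ ℓ < ng i (jk (Nat.findGreatest (fun t => ik t = i) (k - 1))),
            0 ≤ μ (Nat.findGreatest (fun t => ik t = i) (k - 1)) ℓ
            ∧ min (μ (Nat.findGreatest (fun t => ik t = i) (k - 1)) ℓ)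
                (-g i (jk (Nat.findGreatest (fun t => ik t = i) (k - 1))) ℓ (x k i)) ≤ δ)
      ∧ Tendsto (fun k : ℕ =>
          ‖gradient (fun t => f (Function.update (x k) i t)) (x k i)
            + ∑ ℓ ∈ Finset.range (ng i (jk (Nat.findGreatest (fun t => ik t = i) (k - 1)))),
                μ (Nat.findGreatest (fun t => ik t = i) (k - 1)) ℓ
                  • gradient (g i (jk (Nat.findGreatest (fun t => ik t = i) (k - 1))) ℓ)
                      (x k i)‖)
          atTop (𝓝 0)  := by
  -- the step length
  set D : ℕ → ℝ := fun t => ‖x (t + 1) (ik t) - x t (ik t)‖ with hD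
  have hDnn : ∀ t, 0 ≤ D t := fun t => norm_nonneg _
  -- f (x k) is antitone and bounded below, hence D → 0
  have hD0 : Tendsto D atTop (𝓝 0) := by
    have hmono : ∀ k, f (x (k + 1)) ≤ f (x k) := by
      intro k
      have := hdescent k
      nlinarith [sq_nonneg (D k), hDnn k]
    have hanti : Antitone fun k => f (x k) := antitone_nat_of_succ_le hmono
    have hbdd : BddBelow (Set.range fun k => f (x k)) := by
      refine ⟨fbound, ?_⟩
      rintro y ⟨k, rfl⟩
      exact hfb k
    have hconv : Tendsto (fun k => f (x k)) atTop (𝓝 (⨅ k, f (x k))) :=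
      tendsto_atTop_ciInf hanti hbdd
    have hconv1 : Tendsto (fun k => f (x (k + 1))) atTop (𝓝 (⨅ k, f (x k))) :=
      (Filter.tendsto_add_atTop_iff_nat 1).2 hconv
    have hdiff : Tendsto (fun k => f (x k) - f (x (k + 1))) atTop (𝓝 0) := by
      simpa using hconv.sub hconv1
    have hD2 : Tendsto (fun k => D k ^ 2) atTop (𝓝 0) := by
      have hdiv : Tendsto (fun k => (f (x k) - f (x (k + 1))) / α) atTop (𝓝 0) := by
        simpa using hdiff.div_const α
      refine squeeze_zero' (Filter.Eventually.of_forall fun k => sq_nonneg _)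
        (Filter.Eventually.of_forall fun k => ?_) hdiv
      have := hdescent k
      rw [le_div_iff₀ hα]
      nlinarith
    have := hD2.sqrt
    rw [Real.sqrt_zero] at this
    refine this.congr fun k => ?_
    rw [Real.sqrt_sq (hDnn k)]
  -- accumulated Lipschitz bound on the change of partial gradients
  have chain : ∀ (i : Fin p) (a b : ℕ), a ≤ b →
      ‖gradient (fun t => f (Function.update (x b) i t)) (x b i)
        - gradient (fun t => f (Function.update (x a) i t)) (x a i)‖
      ≤ γ * ∑ t ∈ Finset.Ico a b, D t := by
    intro i a b hab
    induction b, hab using Nat.le_induction with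
    | base => simp
    | succ n hn ih =>
      have h1 : ‖gradient (fun t => f (Function.update (x (n + 1)) i t)) (x (n + 1) i)
          - gradient (fun t => f (Function.update (x n) i t)) (x n i)‖ ≤ γ * D n := by
        rw [norm_sub_rev]
        exact hlip2 n (n + 1) (ik n) (fun j hj => (hupdate n j hj).symm) i
      calc ‖gradient (fun t => f (Function.update (x (n + 1)) i t)) (x (n + 1) i)
          - gradient (fun t => f (Function.update (x a) i t)) (x a i)‖
          ≤ ‖gradient (fun t => f (Function.update (x (n + 1)) i t)) (x (n + 1) i)
              - gradient (fun t => f (Function.update (x n) i t)) (x n i)‖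
            + ‖gradient (fun t => f (Function.update (x n) i t)) (x n i)
              - gradient (fun t => f (Function.update (x a) i t)) (x a i)‖ :=
            norm_sub_le_norm_sub_add_norm_sub _ _ _
        _ ≤ γ * D n + γ * ∑ t ∈ Finset.Ico a n, D t := add_le_add h1 ih
        _ = γ * ∑ t ∈ Finset.Ico a (n + 1), D t := by
            rw [Finset.sum_Ico_succ_top hn]; ring
  intro i
  -- key facts about the latest iteration K < k with ik K = i
  have key : ∀ k, m < k → ∀ K, Nat.findGreatest (fun t => ik t = i) (k - 1) = K →
      ik K = i ∧ K + 1 ≤ k ∧ k ≤ K + m ∧ x k i = x (K + 1) i := by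
    intro k hk K hK
    obtain ⟨k₀, hk₀m, hk₀⟩ := hfirst i
    have hk₀le : k₀ ≤ k - 1 := by omega
    have hP : ik K = i := by
      subst hK; exact Nat.findGreatest_spec (P := fun t => ik t = i) hk₀le hk₀
    have hKle : K ≤ k - 1 := hK ▸ Nat.findGreatest_le _
    have hmaxP : ∀ t, K < t → t ≤ k - 1 → ik t ≠ i := by
      intro t h1 h2
      subst hK
      exact Nat.findGreatest_is_greatest h1 h2
    have hkm : k ≤ K + m := by
      by_contra h
      push_neg at h
      obtain ⟨k', h1, h2, h3⟩ := hgap i K hP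
      exact hmaxP k' h1 (by omega) h3
    have hxeq : ∀ n, K + 1 ≤ n → n ≤ k → x n i = x (K + 1) i := by
      intro n h1
      induction n, h1 using Nat.le_induction with
      | base => intro _; rfl
      | succ n hn ih =>
        intro h2
        have hne : i ≠ ik n := fun h => hmaxP n (by omega) (by omega) h.symm
        rw [hupdate n i hne]
        exact ih (by omega)
    exact ⟨hP, by omega, hkm, hxeq k (by omega) le_rfl⟩
  constructor
  · -- parts (a) and (b)
    intro k hk
    generalize hK : Nat.findGreatest (fun t => ik t = i) (k - 1) = K
    obtain ⟨hPK, hKk, hkKm, hxeq⟩ := key k hk K hK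
    subst hPK
    refine ⟨?_, ?_⟩
    · rw [hxeq]; exact hmem K
    · intro ℓ hℓ
      refine ⟨hμ K ℓ, ?_⟩
      rw [hxeq]
      rcases halt K with ⟨-, -, h3⟩ | ⟨-, -, h3⟩
      · exact h3 ℓ hℓ
      · exact (h3 ℓ hℓ).trans hδ
  · -- part (c)
    set C : ℝ := γ + γ + θ + cB + 2 * (γ + cB + 2 * α) with hC
    have bound : ∀ k, m < k →
        ‖gradient (fun t => f (Function.update (x k) i t)) (x k i)
          + ∑ ℓ ∈ Finset.range (ng i (jk (Nat.findGreatest (fun t => ik t = i) (k - 1)))),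
              μ (Nat.findGreatest (fun t => ik t = i) (k - 1)) ℓ
                • gradient (g i (jk (Nat.findGreatest (fun t => ik t = i) (k - 1))) ℓ)
                    (x k i)‖
        ≤ C * ∑ t ∈ Finset.Ico (k - m) k, D t := by
      intro k hk
      generalize hK : Nat.findGreatest (fun t => ik t = i) (k - 1) = K
      obtain ⟨hPK, hKk, hkKm, hxeq⟩ := key k hk K hK
      subst hPK
      have hSeq : (∑ ℓ ∈ Finset.range (ng (ik K) (jk K)),
            μ K ℓ • gradient (g (ik K) (jk K) ℓ) (x k (ik K)))
          = ∑ ℓ ∈ Finset.range (ng (ik K) (jk K)),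
            μ K ℓ • gradient (g (ik K) (jk K) ℓ) (x (K + 1) (ik K)) := by
        rw [hxeq]
      rw [hSeq]
      set Gk : EuclideanSpace ℝ (Fin (nd (ik K))) :=
        gradient (fun t => f (Function.update (x k) (ik K) t)) (x k (ik K)) with hGk
      set G1 : EuclideanSpace ℝ (Fin (nd (ik K))) :=
        gradient (fun t => f (Function.update (x (K + 1)) (ik K) t)) (x (K + 1) (ik K)) with hG1
      set G0 : EuclideanSpace ℝ (Fin (nd (ik K))) :=
        gradient (fun t => f (Function.update (x K) (ik K) t)) (x K (ik K)) with hG0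
      set S' : EuclideanSpace ℝ (Fin (nd (ik K))) :=
        ∑ ℓ ∈ Finset.range (ng (ik K) (jk K)),
          μ K ℓ • gradient (g (ik K) (jk K) ℓ) (x (K + 1) (ik K)) with hS'
      set d : EuclideanSpace ℝ (Fin (nd (ik K))) := x (K + 1) (ik K) - x K (ik K) with hd
      have hDKd : D K = ‖d‖ := rfl
      have hchain1 : ‖Gk - G1‖ ≤ γ * ∑ t ∈ Finset.Ico (K + 1) k, D t :=
        chain (ik K) (K + 1) k hKk
      have hsubset : (∑ t ∈ Finset.Ico (K + 1) k, D t) ≤ ∑ t ∈ Finset.Ico (k - m) k, D t :=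
        Finset.sum_le_sum_of_subset_of_nonneg
          (Finset.Ico_subset_Ico (by omega) le_rfl) (fun t _ _ => hDnn t)
      have hDK : D K ≤ ∑ t ∈ Finset.Ico (k - m) k, D t :=
        Finset.single_le_sum (fun t _ => hDnn t) (by simp [Finset.mem_Ico]; omega)
      have hSnn : 0 ≤ ∑ t ∈ Finset.Ico (k - m) k, D t :=
        Finset.sum_nonneg fun t _ => hDnn t
      rcases halt K with ⟨-, h2, -⟩ | ⟨-, h2, -⟩
      · -- alternative 1
        have hres : ‖G0 + Bk K d + σ K • d + S'‖ ≤ θ * D K := h2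
        have hB : ‖Bk K d‖ ≤ cB * D K := by
          calc ‖Bk K d‖ ≤ ‖Bk K‖ * ‖d‖ := (Bk K).le_opNorm d
            _ ≤ cB * D K := by
                rw [hDKd]
                exact mul_le_mul_of_nonneg_right (hBnorm K) (norm_nonneg d)
        have hsd : ‖σ K • d‖ ≤ 2 * (γ + cB + 2 * α) * D K := by
          rw [norm_smul, Real.norm_eq_abs, abs_of_nonneg (hσ K).1, hDKd]
          exact mul_le_mul_of_nonneg_right (le_of_lt (hσ K).2) (norm_nonneg d)
        have hl1 : ‖G1 - G0‖ ≤ γ * D K := by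
          rw [norm_sub_rev]
          exact hlip1 K
        have hid : Gk + S' = (Gk - G1) + (G1 - G0) + (G0 + Bk K d + σ K • d + S')
            - Bk K d - σ K • d := by abel
        rw [hid]
        have t1 : ‖(Gk - G1) + (G1 - G0) + (G0 + Bk K d + σ K • d + S')
              - Bk K d - σ K • d‖
            ≤ ‖Gk - G1‖ + ‖G1 - G0‖ + ‖G0 + Bk K d + σ K • d + S'‖
              + ‖Bk K d‖ + ‖σ K • d‖ := by
          calc ‖(Gk - G1) + (G1 - G0) + (G0 + Bk K d + σ K • d + S')
                - Bk K d - σ K • d‖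
              ≤ ‖(Gk - G1) + (G1 - G0) + (G0 + Bk K d + σ K • d + S') - Bk K d‖
                + ‖σ K • d‖ := norm_sub_le _ _
            _ ≤ (‖(Gk - G1) + (G1 - G0) + (G0 + Bk K d + σ K • d + S')‖ + ‖Bk K d‖)
                + ‖σ K • d‖ := by
                exact add_le_add_left (norm_sub_le _ _) _
            _ ≤ (‖Gk - G1‖ + ‖G1 - G0‖ + ‖G0 + Bk K d + σ K • d + S'‖ + ‖Bk K d‖)
                + ‖σ K • d‖ := by
                exact add_le_add_left (add_le_add_left norm_add₃_le _) _
            _ = _ := by ring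
        refine t1.trans ?_
        have e1 : γ * (∑ t ∈ Finset.Ico (K + 1) k, D t)
            ≤ γ * ∑ t ∈ Finset.Ico (k - m) k, D t :=
          mul_le_mul_of_nonneg_left hsubset (le_of_lt hγ)
        have e2 : γ * D K ≤ γ * ∑ t ∈ Finset.Ico (k - m) k, D t :=
          mul_le_mul_of_nonneg_left hDK (le_of_lt hγ)
        have e3 : θ * D K ≤ θ * ∑ t ∈ Finset.Ico (k - m) k, D t :=
          mul_le_mul_of_nonneg_left hDK (le_of_lt hθ)
        have e4 : cB * D K ≤ cB * ∑ t ∈ Finset.Ico (k - m) k, D t :=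
          mul_le_mul_of_nonneg_left hDK (le_of_lt hcB)
        have e5 : 2 * (γ + cB + 2 * α) * D K
            ≤ 2 * (γ + cB + 2 * α) * ∑ t ∈ Finset.Ico (k - m) k, D t :=
          mul_le_mul_of_nonneg_left hDK (by positivity)
        rw [hC]
        linarith [hchain1, hl1, hres, hB, hsd]
      · -- alternative 2
        have hzero : G1 + S' = 0 := h2
        have hid : Gk + S' = (Gk - G1) + (G1 + S') := by abel
        rw [hid, hzero, add_zero]
        have : ‖Gk - G1‖ ≤ γ * ∑ t ∈ Finset.Ico (k - m) k, D t :=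
          hchain1.trans (mul_le_mul_of_nonneg_left hsubset (le_of_lt hγ))
        refine this.trans ?_
        have hCγ : γ ≤ C := by rw [hC]; nlinarith
        exact mul_le_mul_of_nonneg_right hCγ hSnn
    -- the sliding-window sum tends to 0
    have hS : Tendsto (fun k => ∑ t ∈ Finset.Ico (k - m) k, D t) atTop (𝓝 0) := by
      have h1 : Tendsto (fun k => ∑ j ∈ Finset.range m, D (k - m + j)) atTop (𝓝 0) := by
        have h0 : (0 : ℝ) = ∑ j ∈ Finset.range m, (0 : ℝ) := by simp
        rw [h0]
        refine tendsto_finset_sum _ fun j _ => ?_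
        have htop : Tendsto (fun k : ℕ => k - m + j) atTop atTop := by
          refine Filter.tendsto_atTop_atTop.2 fun b => ⟨b + m, fun a ha => by omega⟩
        exact hD0.comp htop
      refine Tendsto.congr' ?_ h1
      filter_upwards [eventually_ge_atTop m] with k hk
      rw [Finset.sum_Ico_eq_sum_range, Nat.sub_sub_self hk]
    have hCS : Tendsto (fun k => C * ∑ t ∈ Finset.Ico (k - m) k, D t) atTop (𝓝 0) := by
      simpa using hS.const_mul C
    refine squeeze_zero' (Filter.Eventually.of_forall fun k => norm_nonneg _) ?_ hCS
    filter_upwards [eventually_gt_atTop m] with k hk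
    exact bound k hk
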